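/- If D' ⊆ D is concise w.r.t. D, (x,y) ∉ D is a new example, and the AACBR inference from D' predicts (x,y), then (x,y) is not includable w.r.t. D', and D' remains concise w.r.t. D ∪ {(x,y)}. -/
import Mathlib


/-- `(x,y)` is surprising w.r.t. `D'`: without it, the classifier predicts differently. -/
def Surprising {X Y : Type*} (C : Set (X × Y) → X → Y) (D' : Set (X × Y)) (e : X × Y) : Prop :=
  C (D' \ {e}) e.1 ≠ e.2

/-- `(x,y)` is sufficient w.r.t. `D'`: adding it makes it inferable. -/
def Sufficient {X Y : Type*} (C : Set (X × Y) → X → Y) (D' : Set (X × Y)) (e : X × Y) : Prop :=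
  C (insert e D') e.1 = e.2

/-- `(x,y)` is includable w.r.t. `D'` iff it is both surprising and sufficient. -/
def Includable {X Y : Type*} (C : Set (X × Y) → X → Y) (D' : Set (X × Y)) (e : X × Y) : Prop :=
  Surprising C D' e ∧ Sufficient C D' e

/-- `S'` is concise w.r.t. `S` iff `S'` is exactly the set of examples of `S`
includable w.r.t. `S'`. -/
def Concise {X Y : Type*} (C : Set (X × Y) → X → Y) (S' S : Set (X × Y)) : Prop :=
  S' = {e ∈ S | Includable C S' e}

/-- If `D'` is concise w.r.t. `D`, `(x,y) ∉ D` is a new example, and the inference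
from `D'` predicts `(x,y)`, then `(x,y)` is not includable w.r.t. `D'` and
`D'` remains concise w.r.t. `D ∪ {(x,y)}`. -/
theorem concise_stable_under_predicted_example {X Y : Type*}
    (C : Set (X × Y) → X → Y) (D D' : Set (X × Y)) (e : X × Y)
    (hconc : Concise C D' D) (hnew : e ∉ D) (hpred : C D' e.1 = e.2) :
    ¬ Includable C D' e ∧ Concise C D' (D ∪ {e}) := by
  have heD' : e ∉ D' := by
    intro h
    rw [hconc] at h
    exact hnew h.1
  have hdiff : D' \ {e} = D' := by
    ext a; simp only [Set.mem_diff, Set.mem_singleton_iff]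
    constructor
    · exact fun h => h.1
    · exact fun h => ⟨h, fun he => heD' (he ▸ h)⟩
  have hni : ¬ Includable C D' e := by
    intro ⟨hs, _⟩
    rw [Surprising, hdiff] at hs; exact hs hpred
  refine ⟨hni, ?_⟩
  ext a
  constructor
  · intro ha
    have := hconc ▸ ha
    exact ⟨Or.inl this.1, this.2⟩
  · rintro ⟨(h | h), hinc⟩
    · rw [hconc]; exact ⟨h, hinc⟩
    · exact absurd hinc (Set.mem_singleton_iff.mp h ▸ hni)
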